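/- Let A be a Banach algebra with rad(A) = rann(A) and A/rad(A) commutative, with a right identity, and let T be a right multiplier of A (T(ab) = a T(b) for all a, b). Then the following are equivalent: (i) T(A) ⊆ rad(A); (ii) T is spectrally infinitesimal; (iii) T is a derivation of A; (iv) T = 0. -/

import Mathlib

open scoped ENNReal

/-- The right annihilator of a (possibly non-unital) algebra. -/
def rannSet (A : Type*) [NonUnitalNonAssocRing A] : Set A :=
  {c : A | ∀ a : A, a * c = 0}

/-- The Jacobson radical of a (possibly non-unital) Banach algebra, defined as
`A ∩ rad(A¹)` via the unitization. -/
def radSet (A : Type*) [NonUnitalRing A] [Module ℂ A]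
    [IsScalarTower ℂ A A] [SMulCommClass ℂ A A] : Set A :=
  {a : A | (a : Unitization ℂ A) ∈ Ideal.jacobson (⊥ : Ideal (Unitization ℂ A))}

/-- Spectral radius of an element of a (possibly non-unital) Banach algebra,
computed in the unitization. -/
noncomputable def sprad {A : Type*} [NonUnitalNormedRing A] [NormedSpace ℂ A]
    [IsScalarTower ℂ A A] [SMulCommClass ℂ A A] (a : A) : ℝ≥0∞ :=
  spectralRadius ℂ ((a : Unitization ℂ A))

/-- The center of an algebra. -/
def centerSet (A : Type*) [Mul A] : Set A := {z : A | ∀ a : A, a * z = z * a}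

/-- `apow a n = a ^ (n + 1)` (powers in a possibly non-unital algebra). -/
def apow {A : Type*} [Mul A] (a : A) : ℕ → A
  | 0 => a
  | n + 1 => apow a n * a

lemma spectralRadius_zero' {B : Type*} [Ring B] [Algebra ℂ B] :
    spectralRadius ℂ (0 : B) = 0 := by
  rw [spectralRadius]
  refine le_antisymm (iSup₂_le fun k hk => ?_) zero_le
  have hk0 : k = 0 := by
    by_contra hkne
    rw [spectrum.mem_iff, sub_zero] at hk
    exact hk ((isUnit_iff_ne_zero.mpr hkne).map (algebraMap ℂ B))
  simp [hk0]

/-- If the spectral radius of `x` is zero, then `1 + x` is a unit. -/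
lemma isUnit_one_add_of_spectralRadius_zero {B : Type*} [Ring B] [Algebra ℂ B]
    {x : B} (h : spectralRadius ℂ x = 0) : IsUnit (1 + x) := by
  have hmem : (-1 : ℂ) ∉ spectrum ℂ x := by
    intro hm
    have hle : (‖(-1 : ℂ)‖₊ : ℝ≥0∞) ≤ spectralRadius ℂ x :=
      le_iSup₂ (f := fun k (_ : k ∈ spectrum ℂ x) => (‖k‖₊ : ℝ≥0∞)) (-1 : ℂ) hm
    rw [h] at hle
    simp at hle
  have h1 := spectrum.notMem_iff.mp hmem
  rw [map_neg, map_one,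
    show -(1 : B) - x = -(1 + x) by rw [neg_add, ← sub_eq_add_neg]] at h1
  exact (IsUnit.neg_iff _).mp h1

theorem right_multiplier_tfae {A : Type*} [NonUnitalNormedRing A] [NormedSpace ℂ A]
    [IsScalarTower ℂ A A] [SMulCommClass ℂ A A] [CompleteSpace A]
    (hrad : radSet A = rannSet A)
    (hcomm : ∀ a b : A, a * b - b * a ∈ radSet A)
    (e : A) (he : ∀ a : A, a * e = a)
    (T : A →ₗ[ℂ] A) (hT : ∀ a b : A, T (a * b) = a * T b) :
    List.TFAE
      [ ∀ a : A, T a ∈ radSet A,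
        ∀ a : A, sprad (T a) = 0,
        ∀ a b : A, T (a * b) = T a * b + a * T b,
        T = 0 ] := by
  have hc : ∀ a : A, T a = a * T e := fun a => by
    conv_lhs => rw [← he a]
    exact hT a e
  tfae_have 1 → 4
  | h1 => by
    have he' : T e ∈ rannSet A := hrad ▸ h1 e
    ext a
    simp only [LinearMap.zero_apply]
    rw [hc a]
    exact he' a
  tfae_have 4 → 2
  | h4 => by
    intro a
    rw [h4]
    show sprad (0 : A) = 0
    rw [sprad, Unitization.inr_zero]
    exact spectralRadius_zero'
  tfae_have 4 → 3
  | h4 => by intro a b; rw [h4]; simp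
  tfae_have 3 → 1
  | h3 => by
    have hz : ∀ a : A, T a = 0 := by
      intro a
      have h := h3 a e
      rw [he a, he (T a), ← hc a] at h
      exact left_eq_add.mp h
    intro a
    rw [hrad, hz a]
    intro x
    exact mul_zero x
  tfae_have 2 → 1
  | h2 => by
    intro a
    rw [radSet, Set.mem_setOf_eq, Ideal.mem_jacobson_iff]
    intro y
    have key : y * ((T a : A) : Unitization ℂ A)
        = ((T (y.fst • a + y.snd * a) : A) : Unitization ℂ A) := by
      conv_lhs => rw [← Unitization.inl_fst_add_inr_snd_eq y]
      rw [add_mul, Unitization.inl_mul_inr, ← Unitization.inr_mul,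
        ← Unitization.inr_add, map_add, map_smul, ← hT y.snd a]
    have hu : IsUnit ((1 : Unitization ℂ A) + y * ((T a : A) : Unitization ℂ A)) := by
      rw [key]
      exact isUnit_one_add_of_spectralRadius_zero (h2 _)
    obtain ⟨u, hu⟩ := hu
    refine ⟨↑u⁻¹, ?_⟩
    rw [Ideal.mem_bot, mul_assoc, sub_eq_zero]
    calc ↑u⁻¹ * (y * ((T a : A) : Unitization ℂ A)) + ↑u⁻¹
        = ↑u⁻¹ * ((1 : Unitization ℂ A) + y * ((T a : A) : Unitization ℂ A)) := by
          rw [mul_add, mul_one, add_comm]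
      _ = ↑u⁻¹ * (u : Unitization ℂ A) := by rw [hu]
      _ = 1 := u.inv_mul
  tfae_finish
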